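/- Let f(z) = z ∏_{n≥1}(1 - z²/u_n²) with u_n > 0 and ∑ 1/u_n² < ∞, and let r* ∈ (0, u_1) satisfy f'(r*) = 0. Then for all z with |z| < r*, Re(z f'(z)/f(z)) > 0. -/

import Mathlib

open Complex


/-- Re(w/(a-w)) ≤ ‖w‖/(a-‖w‖) for real a > ‖w‖. -/
lemma aux_re_div_le {w : ℂ} {a : ℝ} (ha : ‖w‖ < a) :
    (w / ((a : ℂ) - w)).re ≤ ‖w‖ / (a - ‖w‖) := by
  have ha0 : 0 < a := lt_of_le_of_lt (norm_nonneg w) ha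
  have hre : w.re ≤ ‖w‖ := Complex.re_le_norm w
  have hdre : 0 < ((a : ℂ) - w).re := by
    simp only [Complex.sub_re, Complex.ofReal_re]; linarith
  have hd0 : ((a : ℂ) - w) ≠ 0 := by
    intro h
    rw [h] at hdre; simp at hdre
  have key : (((a : ℂ)) / ((a : ℂ) - w)).re ≤ a / (a - ‖w‖) := by
    rw [Complex.div_re]
    have hns : 0 < Complex.normSq ((a : ℂ) - w) := Complex.normSq_pos.2 hd0
    simp only [Complex.ofReal_re, Complex.ofReal_im, zero_mul, zero_div, add_zero]
    have h1 : ((a : ℂ) - w).re ^ 2 ≤ Complex.normSq ((a : ℂ) - w) := by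
      rw [Complex.normSq_apply]; nlinarith [sq_nonneg ((a:ℂ) - w).im]
    calc a * ((a : ℂ) - w).re / Complex.normSq ((a : ℂ) - w)
        ≤ a * ((a : ℂ) - w).re / (((a : ℂ) - w).re ^ 2) := by
          apply div_le_div_of_nonneg_left (by positivity) (by positivity) h1
      _ = a / ((a : ℂ) - w).re := by
          have h2 : (0:ℝ) < a - w.re := by simpa using hdre
          field_simp
      _ ≤ a / (a - ‖w‖) := by
          apply div_le_div_of_nonneg_left (le_of_lt ha0) (by linarith) ?_
          simp only [Complex.sub_re, Complex.ofReal_re]; linarith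
  have hw : w / ((a : ℂ) - w) = (a : ℂ) / ((a : ℂ) - w) - 1 := by
    field_simp
    ring
  rw [hw]
  have hne : a - ‖w‖ ≠ 0 := by linarith
  have heq : a / (a - ‖w‖) = ‖w‖ / (a - ‖w‖) + 1 := by
    rw [div_add' _ _ _ hne]
    congr 1
    ring
  simp only [Complex.sub_re, Complex.one_re]
  linarith

lemma aux_summable_real (u : ℕ → ℝ) (hupos : ∀ n, 0 < u n) (hmono : ∀ n, u 0 ≤ u n)
    (husum : Summable (fun n => 1 / (u n) ^ 2)) {t : ℝ} (ht : 0 ≤ t) (ht2 : t < u 0) :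
    Summable (fun n => t ^ 2 / ((u n) ^ 2 - t ^ 2)) := by
  have h0 : 0 < u 0 := hupos 0
  have htu : t ^ 2 < (u 0) ^ 2 := by nlinarith
  set c : ℝ := t ^ 2 / (u 0) ^ 2 with hcdef
  have hc : c < 1 := by rw [hcdef, div_lt_one (by positivity)]; exact htu
  have hc0 : 0 ≤ c := by positivity
  apply Summable.of_nonneg_of_le (fun n =>
      div_nonneg (by positivity) (by nlinarith [hupos n, hmono n]))
    (fun n => ?_) (husum.mul_left (t ^ 2 / (1 - c)))
  have hn : 0 < u n := hupos n
  have hn0 : u 0 ≤ u n := hmono n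
  have hA : (1 - c) * (u n) ^ 2 ≤ (u n) ^ 2 - t ^ 2 := by
    have h1 : c * (u n) ^ 2 ≥ t ^ 2 := by
      rw [hcdef, div_mul_eq_mul_div, ge_iff_le, le_div_iff₀ (by positivity)]
      nlinarith [mul_le_mul_of_nonneg_left (by nlinarith : (u 0) ^ 2 ≤ (u n) ^ 2) (sq_nonneg t)]
    nlinarith
  have hApos : 0 < (1 - c) * (u n) ^ 2 := by
    have : 0 < 1 - c := by linarith
    positivity
  calc t ^ 2 / ((u n) ^ 2 - t ^ 2) ≤ t ^ 2 / ((1 - c) * (u n) ^ 2) :=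
        div_le_div_of_nonneg_left (by positivity) hApos hA
    _ = t ^ 2 / (1 - c) * (1 / (u n) ^ 2) := by
        field_simp
    _ ≤ t ^ 2 / (1 - c) * (1 / (u n) ^ 2) := le_refl _

lemma aux_div_mono {t₁ t₂ c : ℝ} (h0 : 0 ≤ t₁) (h1 : t₁ < t₂) (h2 : t₂ < c) :
    t₁ / (c - t₁) < t₂ / (c - t₂) := by
  rw [div_lt_div_iff₀ (by linarith) (by linarith)]
  nlinarith

lemma aux_log_bound {x : ℂ} {m c : ℝ} (hxm : ‖x‖ ≤ m) (hmc : m ≤ c) (hc : c < 1) :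
    ‖Complex.log (1 - x)‖ ≤ (1 + (1 - c)⁻¹ / 2) * m := by
  have hx1 : ‖x‖ < 1 := lt_of_le_of_lt (hxm.trans hmc) hc
  have h := Complex.norm_log_one_add_le (z := -x) (by simpa using hx1)
  rw [sub_eq_add_neg]
  refine h.trans ?_
  rw [norm_neg]
  have h1 : ‖x‖ ^ 2 ≤ m := by
    calc ‖x‖ ^ 2 ≤ ‖x‖ * 1 := by rw [sq]; exact mul_le_mul_of_nonneg_left hx1.le (norm_nonneg x)
      _ = ‖x‖ := mul_one _
      _ ≤ m := hxm
  have h2 : (1 - ‖x‖)⁻¹ ≤ (1 - c)⁻¹ := by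
    apply inv_anti₀ (by linarith) (by linarith [hxm.trans hmc])
  have hm0 : 0 ≤ m := (norm_nonneg x).trans hxm
  have hc0 : 0 < (1 - c)⁻¹ := inv_pos.2 (by linarith)
  have hmm : ‖x‖ ^ 2 * (1 - ‖x‖)⁻¹ ≤ m * (1 - c)⁻¹ :=
    mul_le_mul h1 h2 (inv_nonneg.2 (by linarith)) hm0
  have : (1 + (1 - c)⁻¹ / 2) * m = m * (1 - c)⁻¹ / 2 + m := by ring
  rw [this]
  linarith

lemma aux_key (u : ℕ → ℝ) (hupos : ∀ n, 0 < u n) (hmono : ∀ n, u 0 ≤ u n)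
    (husum : Summable (fun n => 1 / (u n) ^ 2))
    (f : ℂ → ℂ) (hf : ∀ z : ℂ, f z = z * ∏' n : ℕ, (1 - z ^ 2 / ((u n : ℂ)) ^ 2))
    {z : ℂ} (hz0 : z ≠ 0) (hz : ‖z‖ < u 0) :
    z * deriv f z / f z = 1 - 2 * ∑' n : ℕ, z ^ 2 / (((u n : ℂ)) ^ 2 - z ^ 2) ∧
      Summable (fun n : ℕ => z ^ 2 / (((u n : ℂ)) ^ 2 - z ^ 2)) := by
  have h0 : 0 < u 0 := hupos 0
  set ρ : ℝ := (‖z‖ + u 0) / 2 with hρdef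
  have hρ1 : ‖z‖ < ρ := by rw [hρdef]; linarith
  have hρ2 : ρ < u 0 := by rw [hρdef]; linarith
  have hρ0 : 0 < ρ := lt_of_le_of_lt (norm_nonneg z) hρ1
  set U : Set ℂ := Metric.ball 0 ρ with hUdef
  have hUopen : IsOpen U := Metric.isOpen_ball
  have hzU : z ∈ U := by simpa [hUdef, Metric.mem_ball, dist_eq_norm] using hρ1
  set c : ℝ := ρ ^ 2 / (u 0) ^ 2 with hcdef
  have hc1 : c < 1 := by
    rw [hcdef, div_lt_one (by positivity)]; nlinarith
  -- norms of factors
  have hnorm : ∀ (w : ℂ) (n : ℕ), ‖w ^ 2 / ((u n : ℂ)) ^ 2‖ = ‖w‖ ^ 2 / (u n) ^ 2 := by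
    intro w n
    rw [norm_div, norm_pow, norm_pow, Complex.norm_real, Real.norm_eq_abs,
      abs_of_pos (hupos n)]
  have hmem : ∀ w : ℂ, ‖w‖ < u 0 → ∀ n : ℕ, ‖w ^ 2 / ((u n : ℂ)) ^ 2‖ < 1 := by
    intro w hw n
    rw [hnorm, div_lt_one (pow_pos (hupos n) 2)]
    have h1 : u 0 ≤ u n := hmono n
    nlinarith [norm_nonneg w]
  have hre : ∀ w : ℂ, ‖w‖ < u 0 → ∀ n : ℕ, 0 < ((1 : ℂ) - w ^ 2 / ((u n : ℂ)) ^ 2).re := by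
    intro w hw n
    have h1 := hmem w hw n
    have h2 : (w ^ 2 / ((u n : ℂ)) ^ 2).re ≤ ‖w ^ 2 / ((u n : ℂ)) ^ 2‖ :=
      Complex.re_le_norm _
    simp only [Complex.sub_re, Complex.one_re]
    linarith
  have hne : ∀ w : ℂ, ‖w‖ < u 0 → ∀ n : ℕ, (1 : ℂ) - w ^ 2 / ((u n : ℂ)) ^ 2 ≠ 0 := by
    intro w hw n h
    have := hre w hw n
    rw [h] at this; simp at this
  -- the log function and its sum
  set F : ℕ → ℂ → ℂ := fun n w => Complex.log (1 - w ^ 2 / ((u n : ℂ)) ^ 2) with hFdef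
  set b : ℕ → ℝ := fun n => (1 + (1 - c)⁻¹ / 2) * (ρ ^ 2 * (1 / (u n) ^ 2)) with hbdef
  have hbsum : Summable b := (husum.mul_left _).mul_left _
  have hFle : ∀ (n : ℕ) (w : ℂ), w ∈ U → ‖F n w‖ ≤ b n := by
    intro n w hw
    have hwρ : ‖w‖ < ρ := by simpa [hUdef, Metric.mem_ball, dist_eq_norm] using hw
    have h1 : ‖w ^ 2 / ((u n : ℂ)) ^ 2‖ ≤ ρ ^ 2 * (1 / (u n) ^ 2) := by
      rw [hnorm, mul_one_div]
      exact div_le_div₀ (sq_nonneg ρ) (by nlinarith [norm_nonneg w]) (pow_pos (hupos n) 2) le_rfl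
    have h2 : ρ ^ 2 * (1 / (u n) ^ 2) ≤ c := by
      rw [hcdef, mul_one_div]
      apply div_le_div_of_nonneg_left (sq_nonneg ρ) (pow_pos h0 2) ?_
      · have := hmono n; nlinarith [hupos n]
    exact aux_log_bound h1 h2 hc1
  have hFdiff : ∀ n : ℕ, DifferentiableOn ℂ (F n) U := by
    intro n
    intro w hw
    have hwρ : ‖w‖ < u 0 := by
      have : ‖w‖ < ρ := by simpa [hUdef, Metric.mem_ball, dist_eq_norm] using hw
      linarith
    apply DifferentiableAt.differentiableWithinAt
    apply DifferentiableAt.clog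
    · apply DifferentiableAt.const_sub
      exact (differentiableAt_pow 2).div_const _
    · exact Or.inl (hre w hwρ n)
  set L : ℂ → ℂ := fun w => ∑' n : ℕ, F n w with hLdef
  have hLdiff : DifferentiableOn ℂ L U :=
    Complex.differentiableOn_tsum_of_summable_norm hbsum hFdiff hUopen hFle
  have hLsum : ∀ w : ℂ, ‖w‖ < u 0 → Summable (fun n => F n w) := by
    intro w hw
    apply Summable.of_norm_bounded (g := fun n => (1 + (1 - (‖w‖ ^ 2 / (u 0) ^ 2))⁻¹ / 2) * (‖w‖ ^ 2 * (1 / (u n) ^ 2))) ?_ ?_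
    · exact (husum.mul_left _).mul_left _
    · intro n
      have hcw : ‖w‖ ^ 2 / (u 0) ^ 2 < 1 := by
        rw [div_lt_one (pow_pos h0 2)]; nlinarith [norm_nonneg w]
      apply aux_log_bound ?_ ?_ hcw
      · rw [hnorm, mul_one_div]
      · rw [mul_one_div]
        apply div_le_div_of_nonneg_left (sq_nonneg ‖w‖) (pow_pos h0 2) ?_
        have := hmono n; nlinarith [hupos n, norm_nonneg w]
  -- f = w * exp (L w) on the ball of radius u 0
  have hfeq : ∀ w : ℂ, ‖w‖ < u 0 → f w = w * Complex.exp (L w) := by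
    intro w hw
    have hp : HasProd (fun n : ℕ => (1 : ℂ) - w ^ 2 / ((u n : ℂ)) ^ 2) (Complex.exp (L w)) := by
      have h1 := (hLsum w hw).hasSum.cexp
      have heq : (cexp ∘ fun n : ℕ => F n w) = fun n : ℕ => (1 : ℂ) - w ^ 2 / ((u n : ℂ)) ^ 2 :=
        funext fun n => Complex.exp_log (hne w hw n)
      rwa [heq] at h1
    rw [hf w, hp.tprod_eq]
  -- derivative of L
  have hLderiv : HasSum (fun n : ℕ => deriv (F n) z) (deriv L z) :=
    Complex.hasSum_deriv_of_summable_norm hbsum hFdiff hUopen hFle hzU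
  have hderivF : ∀ n : ℕ, deriv (F n) z = -(2 * z) / (((u n : ℂ)) ^ 2 - z ^ 2) := by
    intro n
    have hun : ((u n : ℂ)) ^ 2 ≠ 0 := by
      exact pow_ne_zero 2 (Complex.ofReal_ne_zero.2 (ne_of_gt (hupos n)))
    have hd1 : HasDerivAt (fun w : ℂ => (1 : ℂ) - w ^ 2 / ((u n : ℂ)) ^ 2)
        (-(2 * z / ((u n : ℂ)) ^ 2)) z := by
      have := ((hasDerivAt_pow 2 z).div_const (((u n : ℂ)) ^ 2)).const_sub 1
      simpa using this
    have hd2 := hd1.clog (Or.inl (hre z hz n))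
    rw [hd2.deriv]
    have hden : (1 : ℂ) - z ^ 2 / ((u n : ℂ)) ^ 2 = (((u n : ℂ)) ^ 2 - z ^ 2) / ((u n : ℂ)) ^ 2 := by
      rw [sub_div, div_self hun]
    have hd0 : ((u n : ℂ)) ^ 2 - z ^ 2 ≠ 0 := by
      intro h
      apply hne z hz n
      rw [hden, h, zero_div]
    rw [hden]
    field_simp
    ring
    simp [Complex.ofReal_ne_zero.2 (ne_of_gt (hupos n))]
  have hS : HasSum (fun n : ℕ => -(2 * z) / (((u n : ℂ)) ^ 2 - z ^ 2)) (deriv L z) := by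
    convert hLderiv using 2 with n
    exact (hderivF _).symm
  have hT : HasSum (fun n : ℕ => z ^ 2 / (((u n : ℂ)) ^ 2 - z ^ 2)) (-(z / 2) * deriv L z) := by
    have := hS.mul_left (-(z / 2))
    have hfun : (fun n : ℕ => z ^ 2 / (((u n : ℂ)) ^ 2 - z ^ 2)) =
        fun n => -(z / 2) * (-(2 * z) / (((u n : ℂ)) ^ 2 - z ^ 2)) := by
      funext n
      rw [← mul_div_assoc]
      congr 1
      ring
    rw [hfun]; exact this
  refine ⟨?_, hT.summable⟩
  -- compute deriv f z
  have hLdz : DifferentiableAt ℂ L z := hLdiff.differentiableAt (hUopen.mem_nhds hzU)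
  have hexp : HasDerivAt (fun w : ℂ => Complex.exp (L w)) (Complex.exp (L z) * deriv L z) z :=
    hLdz.hasDerivAt.cexp
  have hh : HasDerivAt (fun w : ℂ => w * Complex.exp (L w))
      (1 * Complex.exp (L z) + z * (Complex.exp (L z) * deriv L z)) z :=
    (hasDerivAt_id z).mul hexp
  have hfd : deriv f z = 1 * Complex.exp (L z) + z * (Complex.exp (L z) * deriv L z) := by
    have hev : f =ᶠ[nhds z] fun w : ℂ => w * Complex.exp (L w) := by
      filter_upwards [Metric.ball_mem_nhds z (by linarith : (0:ℝ) < u 0 - ‖z‖)] with w hw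
      apply hfeq
      have : dist w z < u 0 - ‖z‖ := hw
      have hd : ‖w - z‖ < u 0 - ‖z‖ := by rwa [← dist_eq_norm]
      calc ‖w‖ ≤ ‖z‖ + ‖w - z‖ := norm_le_norm_add_norm_sub' w z
        _ < u 0 := by linarith
    rw [hev.deriv_eq, hh.deriv]
  have hE : Complex.exp (L z) ≠ 0 := Complex.exp_ne_zero _
  have hfz : f z = z * Complex.exp (L z) := hfeq z hz
  rw [hfd, hfz]
  have hzL : z * deriv L z = -2 * ∑' n : ℕ, z ^ 2 / (((u n : ℂ)) ^ 2 - z ^ 2) := by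
    rw [hT.tsum_eq]
    ring
  have hzE : z * Complex.exp (L z) ≠ 0 := mul_ne_zero hz0 hE
  have hrw : z * (1 * Complex.exp (L z) + z * (Complex.exp (L z) * deriv L z)) =
      (z * Complex.exp (L z)) * (1 + z * deriv L z) := by ring
  rw [hrw, mul_div_cancel_left₀ _ hzE, hzL]
  ring

/-- If `f(z) = z ∏ (1 - z²/u_n²)` with positive strictly increasing zeros `u_n`,
`∑ 1/u_n² < ∞`, and `r* ∈ (0, u_1)` satisfies `f'(r*) = 0`, then
`Re(z f'(z)/f(z)) > 0` for all nonzero `z` with `|z| < r*`. -/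
theorem re_logderiv_pos (u : ℕ → ℝ) (hupos : ∀ n, 0 < u n) (humono : StrictMono u)
    (husum : Summable (fun n => 1 / (u n) ^ 2))
    (f : ℂ → ℂ) (hf : ∀ z : ℂ, f z = z * ∏' n : ℕ, (1 - z ^ 2 / ((u n : ℂ)) ^ 2))
    (r : ℝ) (hr : r ∈ Set.Ioo (0 : ℝ) (u 0)) (hcrit : deriv f (r : ℂ) = 0) :
    ∀ z : ℂ, z ≠ 0 → ‖z‖ < r → 0 < (z * deriv f z / f z).re := by
  obtain ⟨hr0, hru⟩ := hr
  have h0 : 0 < u 0 := hupos 0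
  have hmono : ∀ n, u 0 ≤ u n := fun n => humono.monotone (Nat.zero_le n)
  -- evaluate the sum at r
  have hrC : ((r : ℂ)) ≠ 0 := Complex.ofReal_ne_zero.2 (ne_of_gt hr0)
  have hrn : ‖((r : ℂ))‖ = r := by rw [Complex.norm_real, Real.norm_eq_abs, abs_of_pos hr0]
  obtain ⟨hkeyr, _⟩ := aux_key u hupos hmono husum f hf hrC (by rw [hrn]; exact hru)
  rw [hcrit, mul_zero, zero_div] at hkeyr
  have hcast : ∀ n : ℕ, ((r : ℂ)) ^ 2 / (((u n : ℂ)) ^ 2 - ((r : ℂ)) ^ 2) =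
      ((r ^ 2 / ((u n) ^ 2 - r ^ 2) : ℝ) : ℂ) := by
    intro n; push_cast; ring
  have hSr : ∑' n : ℕ, r ^ 2 / ((u n) ^ 2 - r ^ 2) = 1 / 2 := by
    have h1 : (((∑' n : ℕ, r ^ 2 / ((u n) ^ 2 - r ^ 2)) : ℝ) : ℂ) =
        ∑' n : ℕ, ((r : ℂ)) ^ 2 / (((u n : ℂ)) ^ 2 - ((r : ℂ)) ^ 2) := by
      rw [Complex.ofReal_tsum]
      exact tsum_congr fun n => (hcast n).symm
    have h2 : (((∑' n : ℕ, r ^ 2 / ((u n) ^ 2 - r ^ 2)) : ℝ) : ℂ) = ((1 / 2 : ℝ) : ℂ) := by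
      rw [h1]
      have : (2 : ℂ) * ∑' n : ℕ, ((r : ℂ)) ^ 2 / (((u n : ℂ)) ^ 2 - ((r : ℂ)) ^ 2) = 1 := by
        linear_combination hkeyr
      push_cast
      linear_combination this / 2
    exact_mod_cast h2
  -- now the general z
  intro z hz0 hzr
  have hzu : ‖z‖ < u 0 := hzr.trans hru
  obtain ⟨hkey, hsum⟩ := aux_key u hupos hmono husum f hf hz0 hzu
  rw [hkey]
  have hresum : Summable (fun n : ℕ => (z ^ 2 / (((u n : ℂ)) ^ 2 - z ^ 2)).re) :=
    (Complex.hasSum_re hsum.hasSum).summable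
  have hre_eq : (1 - 2 * ∑' n : ℕ, z ^ 2 / (((u n : ℂ)) ^ 2 - z ^ 2)).re =
      1 - 2 * ∑' n : ℕ, (z ^ 2 / (((u n : ℂ)) ^ 2 - z ^ 2)).re := by
    rw [Complex.sub_re, Complex.one_re, Complex.mul_re, Complex.re_tsum hsum]
    simp
  rw [hre_eq]
  -- bound the real parts
  have hmidsum : Summable (fun n : ℕ => ‖z‖ ^ 2 / ((u n) ^ 2 - ‖z‖ ^ 2)) :=
    aux_summable_real u hupos hmono husum (by positivity) (hzr.trans hru)
  have hrsum : Summable (fun n : ℕ => r ^ 2 / ((u n) ^ 2 - r ^ 2)) :=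
    aux_summable_real u hupos hmono husum hr0.le hru
  have hterm : ∀ n : ℕ, (z ^ 2 / (((u n : ℂ)) ^ 2 - z ^ 2)).re ≤
      ‖z‖ ^ 2 / ((u n) ^ 2 - ‖z‖ ^ 2) := by
    intro n
    have hwa : ‖z ^ 2‖ < (u n) ^ 2 := by
      rw [norm_pow]
      have := hmono n; nlinarith [norm_nonneg z, hupos n]
    have h := aux_re_div_le hwa
    rw [norm_pow] at h
    convert h using 3 <;> push_cast <;> ring
  have hterm2 : ∀ n : ℕ, ‖z‖ ^ 2 / ((u n) ^ 2 - ‖z‖ ^ 2) < r ^ 2 / ((u n) ^ 2 - r ^ 2) := by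
    intro n
    apply aux_div_mono (by positivity) (by nlinarith [norm_nonneg z]) ?_
    have := hmono n; nlinarith [hupos n]
  have hlt : ∑' n : ℕ, (z ^ 2 / (((u n : ℂ)) ^ 2 - z ^ 2)).re < 1 / 2 := by
    calc ∑' n : ℕ, (z ^ 2 / (((u n : ℂ)) ^ 2 - z ^ 2)).re
        ≤ ∑' n : ℕ, ‖z‖ ^ 2 / ((u n) ^ 2 - ‖z‖ ^ 2) :=
          Summable.tsum_le_tsum hterm hresum hmidsum
      _ < ∑' n : ℕ, r ^ 2 / ((u n) ^ 2 - r ^ 2) :=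
          Summable.tsum_lt_tsum (i := 0) (fun n => (hterm2 n).le) (hterm2 0) hmidsum hrsum
      _ = 1 / 2 := hSr
  linarith
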